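/- Let h : (0,1) → (0,∞) and let f : [a,b] → ℝ be nonnegative, integrable, and h-convex, i.e., f(λx+(1-λ)y) ≤ h(λ)f(x) + h(1-λ)f(y) for all x,y ∈ [a,b], λ ∈ (0,1). Then (1/(2h(1/2))) f((a+b)/2) ≤ (1/(b-a)) ∫_a^b f(x) dx ≤ (f(a)+f(b)) ∫_0^1 h(λ) dλ. -/

import Mathlib

open MeasureTheory intervalIntegral Set

theorem h_convex_hadamard (a b : ℝ) (f h : ℝ → ℝ) (hab : a < b)
    (hhpos : ∀ l : ℝ, 0 < l → l < 1 → 0 < h l)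
    (hnonneg : ∀ x ∈ Set.Icc a b, 0 ≤ f x)
    (hconv : ∀ x ∈ Set.Icc a b, ∀ y ∈ Set.Icc a b, ∀ l : ℝ, 0 < l → l < 1 →
      f (l * x + (1 - l) * y) ≤ h l * f x + h (1 - l) * f y)
    (hint : IntervalIntegrable f MeasureTheory.volume a b)
    (hinth : IntervalIntegrable h MeasureTheory.volume 0 1) :
    (1 / (2 * h (1 / 2))) * f ((a + b) / 2) ≤ (1 / (b - a)) * ∫ x in a..b, f x ∧
    (1 / (b - a)) * (∫ x in a..b, f x) ≤ (f a + f b) * ∫ l in (0:ℝ)..1, h l := by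
  have hba : (0:ℝ) < b - a := by linarith
  have hH : 0 < h (1/2) := hhpos _ (by norm_num) (by norm_num)
  constructor
  · -- Left inequality
    have hrefl : IntervalIntegrable (fun x => f (a + b - x)) volume a b := by
      have := hint.comp_sub_left (a + b)
      simpa using this.symm
    have key : ∀ x ∈ Icc a b, f ((a + b) / 2) ≤ h (1/2) * f x + h (1/2) * f (a + b - x) := by
      intro x hx
      have hx' : a + b - x ∈ Icc a b := by
        constructor <;> [linarith [hx.2]; linarith [hx.1]]
      have := hconv x hx (a + b - x) hx' (1/2) (by norm_num) (by norm_num)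
      have e1 : (1/2 : ℝ) * x + (1 - 1/2) * (a + b - x) = (a + b) / 2 := by ring
      have e2 : (1 : ℝ) - 1/2 = 1/2 := by norm_num
      rw [e1, e2] at this
      exact this
    have hmono := intervalIntegral.integral_mono_on hab.le
      (_root_.intervalIntegrable_const (c := f ((a + b) / 2)))
      ((hint.const_mul (h (1/2))).add (hrefl.const_mul (h (1/2)))) key
    rw [intervalIntegral.integral_const, intervalIntegral.integral_add
        (hint.const_mul _) (hrefl.const_mul _),
      intervalIntegral.integral_const_mul, intervalIntegral.integral_const_mul] at hmono
    have hrefl_eq : (∫ x in a..b, f (a + b - x)) = ∫ x in a..b, f x := by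
      have := intervalIntegral.integral_comp_sub_left (a := a) (b := b) f (a + b)
      simpa using this
    rw [hrefl_eq] at hmono
    have hIm : (b - a) * f ((a + b) / 2) ≤ 2 * h (1/2) * ∫ x in a..b, f x := by
      simp only [smul_eq_mul] at hmono; linarith
    have h2H : (0:ℝ) < 2 * h (1/2) := by positivity
    rw [show (1:ℝ)/(2*h (1/2)) * f ((a+b)/2) = f ((a+b)/2) / (2*h (1/2)) from by ring,
      show (1:ℝ)/(b-a) * (∫ x in a..b, f x) = (∫ x in a..b, f x)/(b-a) from by ring,
      div_le_div_iff₀ h2H hba]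
    nlinarith [hIm]
  · -- Right inequality
    set F : ℝ → ℝ := fun t => f ((b - a) * t + a) with hF
    have hFint : IntervalIntegrable F volume 0 1 := by
      have h1 := hint.comp_add_right a
      have h2 := h1.comp_mul_left (c := b - a)
      simp only [sub_self, zero_div, div_self hba.ne'] at h2
      exact h2
    have hGint : IntervalIntegrable (fun t => h (1 - t) * f a + h t * f b) volume 0 1 := by
      have h1 : IntervalIntegrable (fun t => h (1 - t)) volume 0 1 := by
        have := hinth.comp_sub_left 1
        simpa using this.symm
      exact (h1.mul_const (f a)).add (hinth.mul_const (f b))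
    have hae : F ≤ᵐ[volume.restrict (Icc (0:ℝ) 1)]
        fun t => h (1 - t) * f a + h t * f b := by
      have h01 : (volume.restrict (Icc (0:ℝ) 1)) {(0:ℝ), 1} = 0 := by
        apply le_antisymm _ (by positivity)
        calc (volume.restrict (Icc (0:ℝ) 1)) {(0:ℝ), 1} ≤ volume {(0:ℝ), 1} :=
              Measure.restrict_le_self _
          _ = 0 := by
              rw [show ({(0:ℝ), 1} : Set ℝ) = {0} ∪ {1} by rfl]
              refine measure_union_null ?_ ?_ <;> simp
      filter_upwards [ae_restrict_mem measurableSet_Icc,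
        (MeasureTheory.measure_eq_zero_iff_ae_notMem.mp h01)] with t ht hne
      simp only [Set.mem_insert_iff, Set.mem_singleton_iff, not_or] at hne
      have ht0 : 0 < t := lt_of_le_of_ne ht.1 (Ne.symm hne.1)
      have ht1 : t < 1 := lt_of_le_of_ne ht.2 hne.2
      have hbmem : b ∈ Icc a b := ⟨hab.le, le_refl b⟩
      have hamem : a ∈ Icc a b := ⟨le_refl a, hab.le⟩
      have := hconv b hbmem a hamem t ht0 ht1
      have e1 : t * b + (1 - t) * a = (b - a) * t + a := by ring
      rw [e1] at this
      simp only [hF]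
      linarith
    have hmono := intervalIntegral.integral_mono_ae_restrict (by norm_num : (0:ℝ) ≤ 1)
      hFint hGint hae
    have hFeq : (∫ t in (0:ℝ)..1, F t) = (b - a)⁻¹ * ∫ x in a..b, f x := by
      have := intervalIntegral.integral_comp_mul_add (a := (0:ℝ)) (b := 1) f hba.ne' a
      simp only [mul_zero, zero_add, mul_one, smul_eq_mul] at this
      rw [hF]
      convert this using 2 <;> ring_nf
    have hGeq : (∫ t in (0:ℝ)..1, (h (1 - t) * f a + h t * f b))
        = (f a + f b) * ∫ l in (0:ℝ)..1, h l := by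
      have h1 : IntervalIntegrable (fun t => h (1 - t)) volume 0 1 := by
        have := hinth.comp_sub_left 1
        simpa using this.symm
      rw [intervalIntegral.integral_add (h1.mul_const (f a)) (hinth.mul_const (f b)),
        intervalIntegral.integral_mul_const, intervalIntegral.integral_mul_const]
      have : (∫ t in (0:ℝ)..1, h (1 - t)) = ∫ l in (0:ℝ)..1, h l := by
        have := intervalIntegral.integral_comp_sub_left (a := (0:ℝ)) (b := 1) h 1
        simpa using this
      rw [this]; ring
    rw [hFeq, hGeq] at hmono
    rw [one_div, inv_mul_eq_div, div_le_iff₀ hba]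
    calc (∫ x in a..b, f x) = (b - a) * ((b - a)⁻¹ * ∫ x in a..b, f x) := by
          field_simp
      _ ≤ (b - a) * ((f a + f b) * ∫ l in (0:ℝ)..1, h l) := by
          exact mul_le_mul_of_nonneg_left hmono hba.le
      _ = (f a + f b) * (∫ l in (0:ℝ)..1, h l) * (b - a) := by ring
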